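/- Let A be a commutative ring with unity, and let Φ ∈ A^{n×(n-1)} and Ψ ∈ A^{(n-1)×n} satisfy ΨΦ = I_{n-1}. Then the row vector Δ* = (Δ_{·;1}(Ψ), ..., Δ_{·;n}(Ψ)) of maximal minors of Ψ is a left inverse of the column vector Δ = (Δ_{1;·}(Φ), ..., Δ_{n;·}(Φ))^T of maximal minors of Φ: Σ_{j=1}^n Δ_{·;j}(Ψ) Δ_{j;·}(Φ) = 1. Conversely, given any left inverse (Δ*_1,...,Δ*_n) of Δ, an explicit left inverse of Φ is obtained whose j-th row is Ψ_j = (-1)^j Δ* M_j Ĩ_n, where M_j is the antisymmetric n×n matrix with (p,s)-entry Δ_{p,s;j}(Φ) for p < s (the minor of Φ omitting rows p, s and column j), and Ĩ_n = diag(1,-1,...,(-1)^{n+1}). -/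

import Mathlib

open Matrix Finset Equiv Equiv.Perm Function

section Helpers

variable {R : Type*} [CommRing R]

private theorem det_mul_expand' {k : ℕ} (M N : Matrix (Fin k) (Fin k) R) :
    det (M * N) = ∑ τ : Perm (Fin k), ∑ σ : Perm (Fin k),
      ((sign σ : ℤ) : R) * ∏ i, M (σ i) (τ i) * N (τ i) i :=
  calc
    det (M * N) = ∑ p : Fin k → Fin k, ∑ σ : Perm (Fin k),
        ((sign σ : ℤ) : R) * ∏ i, M (σ i) (p i) * N (p i) i := by
      simp only [det_apply', Matrix.mul_apply, prod_univ_sum, mul_sum, Fintype.piFinset_univ]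
      rw [Finset.sum_comm]
    _ = ∑ p : Fin k → Fin k with Bijective p, ∑ σ : Perm (Fin k),
        ((sign σ : ℤ) : R) * ∏ i, M (σ i) (p i) * N (p i) i := by
      refine (sum_subset (filter_subset _ _) fun f _ hbij ↦ Matrix.det_mul_aux ?_).symm
      simpa only [true_and, mem_filter, mem_univ] using hbij
    _ = ∑ τ : Perm (Fin k), ∑ σ : Perm (Fin k),
        ((sign σ : ℤ) : R) * ∏ i, M (σ i) (τ i) * N (τ i) i :=
      sum_bij (fun p h ↦ Equiv.ofBijective p (mem_filter.1 h).2) (fun _ _ ↦ mem_univ _)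
        (fun _ _ _ _ h ↦ by injection h)
        (fun b _ ↦ ⟨b, mem_filter.2 ⟨mem_univ _, b.bijective⟩, coe_fn_injective rfl⟩) fun _ _ ↦ rfl

private theorem cb_aux' {m : ℕ} (Ψ : Matrix (Fin (m+1)) (Fin (m+2)) R)
    (Φ : Matrix (Fin (m+2)) (Fin (m+1)) R)
    {p : Fin (m+1) → Fin (m+2)} (H : ¬Injective p) :
    (∑ σ : Perm (Fin (m+1)), ((sign σ : ℤ) : R) * ∏ x, Ψ (σ x) (p x) * Φ (p x) x) = 0 := by
  obtain ⟨i, j, hpij, hij⟩ : ∃ i j, p i = p j ∧ i ≠ j := by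
    rw [Injective] at H
    push_neg at H
    exact H
  exact
    sum_involution (fun σ _ => σ * Equiv.swap i j)
      (fun σ _ => by
        have : (∏ x, Ψ (σ x) (p x)) = ∏ x, Ψ ((σ * Equiv.swap i j) x) (p x) :=
          Fintype.prod_equiv (Equiv.swap i j) _ _ (by simp [Equiv.apply_swap_eq_self hpij])
        simp [this, sign_swap hij, -sign_swap', prod_mul_distrib])
      (fun σ _ _ => (not_congr mul_swap_eq_iff).mpr hij) (fun _ _ => mem_univ _) fun σ _ =>
      mul_swap_involutive i j σ

private theorem cauchyBinet' {m : ℕ} (Ψ : Matrix (Fin (m+1)) (Fin (m+2)) R)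
    (Φ : Matrix (Fin (m+2)) (Fin (m+1)) R) :
    det (Ψ * Φ) = ∑ j : Fin (m+2),
      det (Ψ.submatrix id j.succAbove) * det (Φ.submatrix j.succAbove id) :=
  calc
    det (Ψ * Φ) = ∑ p : Fin (m+1) → Fin (m+2), ∑ σ : Perm (Fin (m+1)),
        ((sign σ : ℤ) : R) * ∏ i, Ψ (σ i) (p i) * Φ (p i) i := by
      simp only [det_apply', Matrix.mul_apply, prod_univ_sum, mul_sum, Fintype.piFinset_univ]
      rw [Finset.sum_comm]
    _ = ∑ p : Fin (m+1) → Fin (m+2) with Injective p, ∑ σ : Perm (Fin (m+1)),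
        ((sign σ : ℤ) : R) * ∏ i, Ψ (σ i) (p i) * Φ (p i) i := by
      refine (sum_subset (filter_subset _ _) fun f _ hinj ↦ cb_aux' Ψ Φ ?_).symm
      simpa only [true_and, mem_filter, mem_univ] using hinj
    _ = ∑ q : Fin (m+2) × Perm (Fin (m+1)), ∑ σ : Perm (Fin (m+1)),
        ((sign σ : ℤ) : R) *
          ∏ i, Ψ (σ i) (q.1.succAbove (q.2 i)) * Φ (q.1.succAbove (q.2 i)) i := by
      refine (sum_bij (fun q _ ↦ q.1.succAbove ∘ q.2) (fun q _ ↦ ?_) (fun q _ q' _ h ↦ ?_)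
        (fun p hp ↦ ?_) (fun q _ ↦ rfl)).symm
      · exact mem_filter.2 ⟨mem_univ _, Fin.succAbove_right_injective.comp q.2.injective⟩
      · have hj : q.1 = q'.1 := by
          by_contra hne
          obtain ⟨z, hz⟩ := Fin.exists_succAbove_eq (Ne.symm hne)
          have := congrFun h (q.2.symm z)
          simp only [Function.comp_apply, Equiv.apply_symm_apply] at this
          rw [hz] at this
          exact Fin.succAbove_ne q'.1 (q'.2 (q.2.symm z)) this.symm
        refine Prod.ext hj (Equiv.ext fun i ↦ ?_)
        have := congrFun h i
        simp only [Function.comp_apply, hj] at this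
        exact Fin.succAbove_right_injective this
      · have hpinj : Injective p := (mem_filter.1 hp).2
        have hnsurj : ¬Surjective p := by
          intro hs
          have := Fintype.card_le_of_surjective p hs
          simp at this
        rw [Function.Surjective] at hnsurj
        push_neg at hnsurj
        obtain ⟨j, hj⟩ := hnsurj
        have hex : ∀ i, ∃ z, j.succAbove z = p i := fun i ↦ Fin.exists_succAbove_eq (hj i)
        choose τf hτf using hex
        have hτinj : Injective τf := fun a b hab ↦ hpinj (by rw [← hτf a, ← hτf b, hab])
        refine ⟨⟨j, Equiv.ofBijective τf (Finite.injective_iff_bijective.mp hτinj)⟩,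
          mem_univ _, funext fun i ↦ ?_⟩
        exact hτf i
    _ = ∑ j : Fin (m+2), ∑ τ : Perm (Fin (m+1)), ∑ σ : Perm (Fin (m+1)),
        ((sign σ : ℤ) : R) * ∏ i, (Ψ.submatrix id j.succAbove) (σ i) (τ i) *
          (Φ.submatrix j.succAbove id) (τ i) i := by
      rw [Fintype.sum_prod_type]
      rfl
    _ = ∑ j : Fin (m+2), det (Ψ.submatrix id j.succAbove * Φ.submatrix j.succAbove id) :=
      Finset.sum_congr rfl fun j _ ↦ (det_mul_expand' _ _).symm
    _ = ∑ j : Fin (m+2), det (Ψ.submatrix id j.succAbove) * det (Φ.submatrix j.succAbove id) := by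
      simp [det_mul]

private theorem cofactor_sum' {k : ℕ} (A : Matrix (Fin (k+1)) (Fin (k+1)) R) (j c : Fin (k+1)) :
    ∑ t : Fin (k+1), (-1:R)^((j:ℕ)+(t:ℕ)) * det (A.submatrix t.succAbove j.succAbove) * A t c
      = if j = c then det A else 0 := by
  have h : ∀ t : Fin (k+1), (-1:R)^((j:ℕ)+(t:ℕ)) * det (A.submatrix t.succAbove j.succAbove)
      = adjugate A j t := fun t ↦ by
    rw [adjugate_fin_succ_eq_det_submatrix, add_comm]
  simp_rw [h]
  have : (∑ t, adjugate A j t * A t c) = (adjugate A * A) j c := (Matrix.mul_apply).symm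
  rw [this, adjugate_mul]
  simp [Matrix.one_apply]

private theorem succAbove_comp' {m : ℕ} (p : Fin (m+2)) (t : Fin (m+1)) (h : (p:ℕ) ≤ (t:ℕ))
    (hp : (p:ℕ) < m+1) (i : Fin m) :
    (t.succ).succAbove ((⟨(p:ℕ), hp⟩ : Fin (m+1)).succAbove i) = p.succAbove (t.succAbove i) := by
  simp only [Fin.succAbove, Fin.lt_def, Fin.coe_castSucc, Fin.val_succ]
  split_ifs <;> (apply Fin.ext; simp_all) <;> omega

private theorem part2_key' {m : ℕ} (Φ : Matrix (Fin (m+2)) (Fin (m+1)) R) (j k : Fin (m+1))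
    (p : Fin (m+2)) :
    ∑ s : Fin (m+2), (-1:R)^((j:ℕ)+1) *
      (if hps : p < s then
          (Φ.submatrix (fun i => s.succAbove
            ((⟨(p:ℕ), lt_of_lt_of_le (Fin.lt_iff_val_lt_val.mp hps) (Fin.is_le s)⟩ :
              Fin (m+1)).succAbove i)) j.succAbove).det
        else if hsp : s < p then
          -(Φ.submatrix (fun i => p.succAbove
            ((⟨(s:ℕ), lt_of_lt_of_le (Fin.lt_iff_val_lt_val.mp hsp) (Fin.is_le p)⟩ :
              Fin (m+1)).succAbove i)) j.succAbove).det
        else 0) * (-1:R)^((s:ℕ)) * Φ s k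
    = if j = k then det (Φ.submatrix p.succAbove id) else 0 := by
  rw [Fin.sum_univ_succAbove _ p]
  have h0 : (-1:R)^((j:ℕ)+1) *
      (if hps : p < p then
          (Φ.submatrix (fun i => p.succAbove
            ((⟨(p:ℕ), lt_of_lt_of_le (Fin.lt_iff_val_lt_val.mp hps) (Fin.is_le p)⟩ :
              Fin (m+1)).succAbove i)) j.succAbove).det
        else if hsp : p < p then
          -(Φ.submatrix (fun i => p.succAbove
            ((⟨(p:ℕ), lt_of_lt_of_le (Fin.lt_iff_val_lt_val.mp hsp) (Fin.is_le p)⟩ :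
              Fin (m+1)).succAbove i)) j.succAbove).det
        else 0) * (-1:R)^((p:ℕ)) * Φ p k = 0 := by
    rw [dif_neg (lt_irrefl p), dif_neg (lt_irrefl p)]
    ring
  rw [h0, zero_add]
  have ht : ∀ t : Fin (m+1), (-1:R)^((j:ℕ)+1) *
      (if hps : p < p.succAbove t then
          (Φ.submatrix (fun i => (p.succAbove t).succAbove
            ((⟨(p:ℕ), lt_of_lt_of_le (Fin.lt_iff_val_lt_val.mp hps)
              (Fin.is_le (p.succAbove t))⟩ : Fin (m+1)).succAbove i)) j.succAbove).det
        else if hsp : p.succAbove t < p then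
          -(Φ.submatrix (fun i => p.succAbove
            ((⟨((p.succAbove t : Fin (m+2)):ℕ), lt_of_lt_of_le (Fin.lt_iff_val_lt_val.mp hsp)
              (Fin.is_le p)⟩ : Fin (m+1)).succAbove i)) j.succAbove).det
        else 0) * (-1:R)^(((p.succAbove t : Fin (m+2)):ℕ)) * Φ (p.succAbove t) k
      = (-1:R)^((j:ℕ)+(t:ℕ)) *
          det ((Φ.submatrix p.succAbove id).submatrix t.succAbove j.succAbove) *
          (Φ.submatrix p.succAbove id) t k := by
    intro t
    rcases lt_or_ge t.castSucc p with hlt | hle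
    · rw [Fin.succAbove_of_castSucc_lt p t hlt]
      rw [dif_neg (asymm hlt), dif_pos hlt]
      simp only [Fin.coe_castSucc, Fin.eta, submatrix_apply, submatrix_submatrix,
        Function.comp_def, id_eq]
      simp only [pow_add, pow_succ]
      rw [Fin.succAbove_of_castSucc_lt p t hlt]
      ring
    · rw [Fin.succAbove_of_le_castSucc p t hle]
      have hps : p < t.succ := lt_of_le_of_lt hle (Fin.castSucc_lt_succ (i := t))
      rw [dif_pos hps]
      have hval : (p:ℕ) ≤ (t:ℕ) := hle
      have hp : (p:ℕ) < m+1 := lt_of_le_of_lt hval t.isLt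
      simp only [succAbove_comp' p t hval hp]
      simp only [Fin.val_succ, submatrix_apply, submatrix_submatrix, Function.comp_def, id_eq]
      simp only [pow_add, pow_succ]
      rw [Fin.succAbove_of_le_castSucc p t hle]
      ring
  rw [Finset.sum_congr rfl fun t _ => ht t, cofactor_sum']

end Helpers

/-- Theorem 2.2(ii)-(iii) in the case m = n-1 (here the matrix Φ is (m+2)×(m+1)):
(1) if Ψ is a left inverse of Φ, the row of maximal minors of Ψ is a left inverse of the
column of maximal minors of Φ; (2) conversely, any left inverse (d_p) of the column of
maximal minors of Φ produces the explicit left inverse Ψ' of Φ whose j-th row is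
(-1)^j Δ* M_j Ĩ_n. -/
theorem stmt14 {R : Type*} [CommRing R] {m : ℕ}
    (Φ : Matrix (Fin (m + 2)) (Fin (m + 1)) R) :
    (∀ Ψ : Matrix (Fin (m + 1)) (Fin (m + 2)) R, Ψ * Φ = 1 →
      ∑ j : Fin (m + 2),
        (Ψ.submatrix id j.succAbove).det * (Φ.submatrix j.succAbove id).det = 1)
    ∧
    (∀ d : Fin (m + 2) → R,
      (∑ p : Fin (m + 2), d p * (Φ.submatrix p.succAbove id).det = 1) →
      ∀ Ψ' : Matrix (Fin (m + 1)) (Fin (m + 2)) R,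
      (∀ j s, Ψ' j s = (-1 : R) ^ ((j : ℕ) + 1) *
          (∑ p : Fin (m + 2), d p *
            (if hps : p < s then
              (Φ.submatrix
                (fun i => s.succAbove
                  ((⟨(p : ℕ), lt_of_lt_of_le (Fin.lt_iff_val_lt_val.mp hps) (Fin.is_le s)⟩ :
                    Fin (m + 1)).succAbove i))
                j.succAbove).det
            else if hsp : s < p then
              -(Φ.submatrix
                (fun i => p.succAbove
                  ((⟨(s : ℕ), lt_of_lt_of_le (Fin.lt_iff_val_lt_val.mp hsp) (Fin.is_le p)⟩ :
                    Fin (m + 1)).succAbove i))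
                j.succAbove).det
            else 0)) * (-1 : R) ^ (s : ℕ)) →
      Ψ' * Φ = 1) := by
  constructor
  · intro Ψ hΨ
    have h := cauchyBinet' Ψ Φ
    rw [hΨ, det_one] at h
    exact h.symm
  · intro d hd Ψ' hΨ'
    ext j k
    rw [Matrix.mul_apply]
    set D : Fin (m + 2) → Fin (m + 2) → R := fun p s =>
      (if hps : p < s then
        (Φ.submatrix
          (fun i => s.succAbove
            ((⟨(p : ℕ), lt_of_lt_of_le (Fin.lt_iff_val_lt_val.mp hps) (Fin.is_le s)⟩ :
              Fin (m + 1)).succAbove i))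
          j.succAbove).det
      else if hsp : s < p then
        -(Φ.submatrix
          (fun i => p.succAbove
            ((⟨(s : ℕ), lt_of_lt_of_le (Fin.lt_iff_val_lt_val.mp hsp) (Fin.is_le p)⟩ :
              Fin (m + 1)).succAbove i))
          j.succAbove).det
      else 0) with hDdef
    have hD : ∀ s, Ψ' j s = (-1 : R) ^ ((j : ℕ) + 1) * (∑ p, d p * D p s) * (-1 : R) ^ (s : ℕ) :=
      fun s => hΨ' j s
    have key : ∀ p : Fin (m + 2),
        ∑ s, (-1:R)^((j:ℕ)+1) * D p s * (-1:R)^((s:ℕ)) * Φ s k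
          = if j = k then det (Φ.submatrix p.succAbove id) else 0 := fun p => part2_key' Φ j k p
    calc
      ∑ s, Ψ' j s * Φ s k
          = ∑ s, ∑ p, d p * ((-1:R)^((j:ℕ)+1) * D p s * (-1:R)^((s:ℕ)) * Φ s k) := by
        refine Finset.sum_congr rfl fun s _ => ?_
        rw [hD s, Finset.mul_sum, Finset.sum_mul, Finset.sum_mul]
        exact Finset.sum_congr rfl fun p _ => by ring
      _ = ∑ p, ∑ s, d p * ((-1:R)^((j:ℕ)+1) * D p s * (-1:R)^((s:ℕ)) * Φ s k) :=
        Finset.sum_comm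
      _ = ∑ p, d p * (if j = k then det (Φ.submatrix p.succAbove id) else 0) := by
        refine Finset.sum_congr rfl fun p _ => ?_
        rw [← Finset.mul_sum, key p]
      _ = (1 : Matrix (Fin (m + 1)) (Fin (m + 1)) R) j k := by
        rw [Matrix.one_apply]
        split_ifs with h
        · simpa using hd
        · simp
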